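/- For density matrices ρ₁, ρ₂ on a D-dimensional Hilbert space with ‖ρ₁ - ρ₂‖₁ ≤ 1, the difference of relative entropies of asymmetry satisfies |Γ(ρ₁) - Γ(ρ₂)| ≤ log₂ D · ‖ρ₁ - ρ₂‖₁ + 2·H(‖ρ₁ - ρ₂‖₁ / 2), where H is the binary entropy and ‖·‖₁ the trace norm. -/

import Mathlib

open Matrix
open scoped Kronecker ComplexOrder
open scoped Classical

variable {n : Type*} [Fintype n] [DecidableEq n]

/-- Density matrix predicate -/
def IsDensityMatrix (ρ : Matrix n n ℂ) : Prop := ρ.PosSemidef ∧ ρ.trace = 1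

/-- von Neumann entropy, base 2 -/
noncomputable def vnEntropy (A : Matrix n n ℂ) : ℝ :=
  if h : A.IsHermitian then -∑ i, h.eigenvalues i * Real.logb 2 (h.eigenvalues i) else 0

/-- twirl over a finite group -/
noncomputable def twirl {G : Type*} [Group G] [Fintype G]
    (U : G →* Matrix.unitaryGroup n ℂ) (ρ : Matrix n n ℂ) : Matrix n n ℂ :=
  (Fintype.card G : ℂ)⁻¹ • ∑ g : G, (U g : Matrix n n ℂ) * ρ * star (U g : Matrix n n ℂ)

/-- relative entropy of asymmetry -/
noncomputable def relEntAsym {G : Type*} [Group G] [Fintype G]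
    (U : G →* Matrix.unitaryGroup n ℂ) (ρ : Matrix n n ℂ) : ℝ :=
  vnEntropy (twirl U ρ) - vnEntropy ρ

/-- square root of a PSD matrix (0 otherwise) -/
noncomputable def sqrtPSD (A : Matrix n n ℂ) : Matrix n n ℂ :=
  if h : A.PosSemidef then
    (h.1.eigenvectorUnitary : Matrix n n ℂ) *
      Matrix.diagonal ((↑) ∘ Real.sqrt ∘ h.1.eigenvalues) *
      (star h.1.eigenvectorUnitary : Matrix n n ℂ)
  else 0

/-- trace norm -/
noncomputable def traceNorm (A : Matrix n n ℂ) : ℝ :=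
  (((Matrix.posSemidef_conjTranspose_mul_self A).1.eigenvectorUnitary : Matrix n n ℂ) *
      Matrix.diagonal (fun i => ((Real.sqrt ((Matrix.posSemidef_conjTranspose_mul_self A).1.eigenvalues i) : ℝ) : ℂ)) *
      (star (Matrix.posSemidef_conjTranspose_mul_self A).1.eigenvectorUnitary : Matrix n n ℂ)).trace.re

/-- fidelity F(ρ,σ) = ‖√ρ√σ‖₁ -/
noncomputable def fidelity (ρ σ : Matrix n n ℂ) : ℝ := traceNorm (sqrtPSD ρ * sqrtPSD σ)

/-- binary entropy, base 2 -/
noncomputable def binEntropy2 (x : ℝ) : ℝ := -x * Real.logb 2 x - (1-x) * Real.logb 2 (1-x)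

/-- matrix logarithm (base 2) of a Hermitian matrix -/
noncomputable def matLogb (A : Matrix n n ℂ) : Matrix n n ℂ :=
  if h : A.IsHermitian then
    (h.eigenvectorUnitary : Matrix n n ℂ) *
      Matrix.diagonal (fun i => (Real.logb 2 (h.eigenvalues i) : ℂ)) *
      star (h.eigenvectorUnitary : Matrix n n ℂ)
  else 0

/-- quantum relative entropy, +∞ if support condition fails -/
noncomputable def relEntropy (ρ σ : Matrix n n ℂ) : EReal :=
  if ∀ v : n → ℂ, σ *ᵥ v = 0 → ρ *ᵥ v = 0 then
    (((ρ * (matLogb ρ - matLogb σ)).trace).re : EReal)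
  else ⊤

/-- complete positivity -/
def IsCompletelyPositive {m : Type*} [Fintype m] [DecidableEq m]
    (Φ : Matrix n n ℂ →ₗ[ℂ] Matrix m m ℂ) : Prop :=
  ∀ (k : ℕ) (M : Matrix (Fin k × n) (Fin k × n) ℂ), M.PosSemidef →
    (Matrix.of fun p q : Fin k × m =>
      (Φ (Matrix.of fun a b => M (p.1, a) (q.1, b))) p.2 q.2).PosSemidef

/-- CPTP map -/
def IsQuantumChannel {m : Type*} [Fintype m] [DecidableEq m]
    (Φ : Matrix n n ℂ →ₗ[ℂ] Matrix m m ℂ) : Prop :=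
  IsCompletelyPositive Φ ∧ ∀ A, (Φ A).trace = A.trace

/-- G-covariance of a map between systems with representations U, V -/
def IsCovariant {m : Type*} [Fintype m] [DecidableEq m] {G : Type*} [Group G]
    (U : G →* Matrix.unitaryGroup n ℂ) (V : G →* Matrix.unitaryGroup m ℂ)
    (Φ : Matrix n n ℂ →ₗ[ℂ] Matrix m m ℂ) : Prop :=
  ∀ g A, Φ ((U g : Matrix n n ℂ) * A * star (U g : Matrix n n ℂ))
    = (V g : Matrix m m ℂ) * Φ A * star (V g : Matrix m m ℂ)

section Aux
open Real
open scoped MatrixOrder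

lemma aux_sqrt_eq {X : Matrix n n ℂ} (hX : X.PosSemidef) :
    (hX.1.eigenvectorUnitary : Matrix n n ℂ) *
      Matrix.diagonal (fun i => ((Real.sqrt (hX.1.eigenvalues i) : ℝ) : ℂ)) *
      (star hX.1.eigenvectorUnitary : Matrix n n ℂ) = CFC.sqrt X := by
  rw [CFC.sqrt_eq_cfc, cfc_nnreal_eq_real _ X, hX.1.cfc_eq, Matrix.IsHermitian.cfc,
    Unitary.conjStarAlgAut_apply]
  congr 1; congr 1; congr 1
  funext i
  simp [max_eq_left (hX.eigenvalues_nonneg i)]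

lemma aux_eq_sqrt {B X : Matrix n n ℂ} (hB : B.PosSemidef) (hX : X.PosSemidef) (h : B ^ 2 = X) :
    B = CFC.sqrt X :=
  ((CFC.sqrt_eq_iff X B hX.nonneg hB.nonneg).mpr (by rw [← h, pow_two])).symm

lemma aux_re_sum {ι : Type*} (s : Finset ι) (f : ι → ℂ) :
    (∑ i ∈ s, f i).re = ∑ i ∈ s, (f i).re :=
  map_sum Complex.reAddGroupHom f s

lemma aux_smul_psd {A : Matrix n n ℂ} (hA : A.PosSemidef) {c : ℝ} (hc : 0 ≤ c) :
    ((c:ℂ) • A).PosSemidef := by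
  constructor
  · show ((c:ℂ) • A)ᴴ = (c:ℂ) • A
    rw [Matrix.conjTranspose_smul, Complex.star_def, Complex.conj_ofReal, hA.1.eq]
  · exact (hA.smul (show (0:ℂ) ≤ (c:ℂ) by exact_mod_cast hc)).2

lemma aux_herm_conj {A B : Matrix n n ℂ} (hA : A.IsHermitian) :
    (B * A * star B).IsHermitian := by
  show (B * A * star B)ᴴ = B * A * star B
  rw [Matrix.star_eq_conjTranspose]
  simp [Matrix.conjTranspose_mul, Matrix.mul_assoc, hA.eq]

lemma aux_trace_conj_diag {V : Matrix n n ℂ} (hV : V ∈ Matrix.unitaryGroup n ℂ) (e : n → ℂ) :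
    (V * Matrix.diagonal e * star V).trace = ∑ j, e j := by
  rw [Matrix.trace_mul_cycle, (Unitary.mem_iff.mp hV).1, Matrix.one_mul,
    Matrix.trace_diagonal]

lemma aux_conj_mul {V : Matrix n n ℂ} (hV : star V * V = 1) (d e : n → ℂ) :
    (V * Matrix.diagonal d * star V) * (V * Matrix.diagonal e * star V)
      = V * Matrix.diagonal (fun i => d i * e i) * star V := by
  have h : Matrix.diagonal (fun i => d i * e i) = Matrix.diagonal d * Matrix.diagonal e := by
    rw [Matrix.diagonal_mul_diagonal]
  rw [h]
  simp only [Matrix.mul_assoc]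
  rw [← Matrix.mul_assoc (star V) V, hV, Matrix.one_mul]

lemma aux_spectral {A : Matrix n n ℂ} (hA : A.IsHermitian) :
    A = (hA.eigenvectorUnitary : Matrix n n ℂ) *
      Matrix.diagonal (fun i => ((hA.eigenvalues i : ℝ) : ℂ)) *
      star (hA.eigenvectorUnitary : Matrix n n ℂ) := by
  conv_lhs => rw [hA.spectral_theorem, Unitary.conjStarAlgAut_apply]
  rfl

lemma aux_conj_diag_entry_re (Q : Matrix n n ℂ) (d : n → ℝ) (i : n) :
    ((Q * Matrix.diagonal (fun j => (d j : ℂ)) * star Q) i i).re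
      = ∑ j, d j * Complex.normSq (Q i j) := by
  have h : (Q * Matrix.diagonal (fun j => (d j : ℂ)) * star Q) i i
      = ∑ j, ((d j * Complex.normSq (Q i j) : ℝ) : ℂ) := by
    rw [Matrix.mul_apply]
    refine Finset.sum_congr rfl fun j _ => ?_
    rw [Matrix.mul_diagonal, Matrix.star_apply, Complex.star_def, mul_comm (Q i j),
      mul_assoc, Complex.mul_conj]
    push_cast
    ring
  rw [h, aux_re_sum]
  simp

lemma aux_row_sum {Q : Matrix n n ℂ} (hQ : Q ∈ Matrix.unitaryGroup n ℂ) (i : n) :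
    ∑ j, Complex.normSq (Q i j) = 1 := by
  have h1 : Q * star Q = 1 := (Unitary.mem_iff.mp hQ).2
  have h2 : (Q * star Q) i i = 1 := by rw [h1]; simp
  rw [Matrix.mul_apply] at h2
  simp only [Matrix.star_apply, Complex.star_def, Complex.mul_conj] at h2
  have := congrArg Complex.re h2
  rw [aux_re_sum] at this
  simpa using this

lemma aux_col_sum {Q : Matrix n n ℂ} (hQ : Q ∈ Matrix.unitaryGroup n ℂ) (j : n) :
    ∑ i, Complex.normSq (Q i j) = 1 := by
  have h1 : star Q * Q = 1 := (Unitary.mem_iff.mp hQ).1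
  have h2 : (star Q * Q) j j = 1 := by rw [h1]; simp
  rw [Matrix.mul_apply] at h2
  simp only [Matrix.star_apply, Complex.star_def] at h2
  have h3 : ∑ i, ((Complex.normSq (Q i j) : ℝ) : ℂ) = 1 := by
    rw [← h2]
    refine Finset.sum_congr rfl fun i _ => ?_
    rw [mul_comm, Complex.mul_conj]
  have := congrArg Complex.re h3
  rw [aux_re_sum] at this
  simpa using this

lemma aux_traceNorm_eq_re_trace_sqrt {A X : Matrix n n ℂ} (hX : X.PosSemidef)
    (h : Aᴴ * A = X) : traceNorm A = (CFC.sqrt X).trace.re := by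
  subst h; rw [traceNorm, aux_sqrt_eq hX]

lemma aux_traceNorm_conj_diag {V : Matrix n n ℂ} (hV : V ∈ Matrix.unitaryGroup n ℂ) (d : n → ℝ) :
    traceNorm (V * Matrix.diagonal (fun i => (d i : ℂ)) * star V) = ∑ i, |d i| := by
  have hUV : star V * V = 1 := (Unitary.mem_iff.mp hV).1
  have hBpsd : (V * Matrix.diagonal (fun i => ((|d i| : ℝ) : ℂ)) * star V).PosSemidef := by
    rw [Matrix.star_eq_conjTranspose]
    refine Matrix.PosSemidef.mul_mul_conjTranspose_same (Matrix.PosSemidef.diagonal ?_) V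
    intro i
    simp only [Pi.zero_apply]
    exact_mod_cast abs_nonneg (d i)
  have hXpsd : (V * Matrix.diagonal (fun i => ((d i * d i : ℝ) : ℂ)) * star V).PosSemidef := by
    rw [Matrix.star_eq_conjTranspose]
    refine Matrix.PosSemidef.mul_mul_conjTranspose_same (Matrix.PosSemidef.diagonal ?_) V
    intro i
    simp only [Pi.zero_apply]
    exact_mod_cast mul_self_nonneg (d i)
  have hdiagherm : (Matrix.diagonal (fun i => (d i : ℂ))).IsHermitian := by
    show _ᴴ = _
    ext i j
    rw [Matrix.conjTranspose_apply, Matrix.diagonal_apply, Matrix.diagonal_apply]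
    rcases eq_or_ne i j with h | h
    · subst h; simp [Complex.conj_ofReal]
    · rw [if_neg (Ne.symm h), if_neg h, star_zero]
  have hAH : (V * Matrix.diagonal (fun i => (d i : ℂ)) * star V)ᴴ
      = V * Matrix.diagonal (fun i => (d i : ℂ)) * star V :=
    (aux_herm_conj hdiagherm).eq
  have hAAX : (V * Matrix.diagonal (fun i => (d i : ℂ)) * star V)ᴴ *
      (V * Matrix.diagonal (fun i => (d i : ℂ)) * star V)
      = V * Matrix.diagonal (fun i => ((d i * d i : ℝ) : ℂ)) * star V := by
    rw [hAH, aux_conj_mul hUV]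
    have : (fun i => (d i : ℂ) * (d i : ℂ)) = fun i => ((d i * d i : ℝ) : ℂ) := by
      funext i; push_cast; ring
    rw [this]
  have hB2 : (V * Matrix.diagonal (fun i => ((|d i| : ℝ) : ℂ)) * star V) ^ 2
      = V * Matrix.diagonal (fun i => ((d i * d i : ℝ) : ℂ)) * star V := by
    rw [pow_two, aux_conj_mul hUV]
    have : (fun i => ((|d i| : ℝ) : ℂ) * ((|d i| : ℝ) : ℂ)) = fun i => ((d i * d i : ℝ) : ℂ) := by
      funext i
      rw [← Complex.ofReal_mul, abs_mul_abs_self]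
    rw [this]
  rw [aux_traceNorm_eq_re_trace_sqrt hXpsd hAAX, ← aux_eq_sqrt hBpsd hXpsd hB2,
    aux_trace_conj_diag hV, aux_re_sum]
  simp

lemma aux_traceNorm_herm {A : Matrix n n ℂ} (hA : A.IsHermitian) :
    traceNorm A = ∑ i, |hA.eigenvalues i| := by
  conv_lhs => rw [aux_spectral hA]
  exact aux_traceNorm_conj_diag hA.eigenvectorUnitary.2 _

lemma aux_traceNorm_nonneg {A : Matrix n n ℂ} (hA : A.IsHermitian) : 0 ≤ traceNorm A := by
  rw [aux_traceNorm_herm hA]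
  exact Finset.sum_nonneg fun i _ => abs_nonneg _

lemma aux_traceNorm_neg (A : Matrix n n ℂ) : traceNorm (-A) = traceNorm A :=
  (aux_traceNorm_eq_re_trace_sqrt (Matrix.posSemidef_conjTranspose_mul_self A) (by simp)).trans (aux_traceNorm_eq_re_trace_sqrt (Matrix.posSemidef_conjTranspose_mul_self A) rfl).symm

lemma aux_traceNorm_conj {U : Matrix n n ℂ} (hU : U ∈ Matrix.unitaryGroup n ℂ)
    (A : Matrix n n ℂ) : traceNorm (U * A * star U) = traceNorm A := by
  have hM := Matrix.posSemidef_conjTranspose_mul_self A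
  have hUU : star U * U = 1 := (Unitary.mem_iff.mp hU).1
  have h1 : (U * A * star U)ᴴ * (U * A * star U) = U * (Aᴴ * A) * star U := by
    simp only [Matrix.star_eq_conjTranspose, Matrix.conjTranspose_mul,
      Matrix.conjTranspose_conjTranspose, Matrix.mul_assoc]
    rw [← Matrix.mul_assoc Uᴴ U]
    rw [Matrix.star_eq_conjTranspose] at hUU
    rw [hUU, Matrix.one_mul]
  have hXpsd : (U * (Aᴴ * A) * star U).PosSemidef := by
    rw [Matrix.star_eq_conjTranspose]; exact hM.mul_mul_conjTranspose_same U
  have hSpsd : (U * CFC.sqrt (Aᴴ * A) * star U).PosSemidef := by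
    rw [Matrix.star_eq_conjTranspose]; exact (CFC.sqrt_nonneg (Aᴴ * A)).posSemidef.mul_mul_conjTranspose_same U
  have hS2 : (U * CFC.sqrt (Aᴴ * A) * star U) ^ 2 = U * (Aᴴ * A) * star U := by
    rw [pow_two]
    simp only [Matrix.mul_assoc]
    rw [← Matrix.mul_assoc (star U) U, hUU, Matrix.one_mul,
      ← Matrix.mul_assoc (CFC.sqrt (Aᴴ * A)) (CFC.sqrt (Aᴴ * A)), CFC.sqrt_mul_sqrt_self _ hM.nonneg, Matrix.mul_assoc]
  rw [aux_traceNorm_eq_re_trace_sqrt hXpsd h1, ← aux_eq_sqrt hSpsd hXpsd hS2,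
    Matrix.trace_mul_cycle, hUU, Matrix.one_mul]
  exact (aux_traceNorm_eq_re_trace_sqrt hM rfl).symm

lemma aux_traceNorm_smul {c : ℝ} (hc : 0 ≤ c) (A : Matrix n n ℂ) :
    traceNorm ((c:ℂ) • A) = c * traceNorm A := by
  have hM := Matrix.posSemidef_conjTranspose_mul_self A
  have h1 : ((c:ℂ) • A)ᴴ * ((c:ℂ) • A) = ((c * c : ℝ) : ℂ) • (Aᴴ * A) := by
    rw [Matrix.conjTranspose_smul, Complex.star_def, Complex.conj_ofReal,
      Matrix.smul_mul, Matrix.mul_smul, smul_smul]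
    push_cast
    ring_nf
  have hXpsd : (((c * c : ℝ) : ℂ) • (Aᴴ * A)).PosSemidef := aux_smul_psd hM (mul_self_nonneg c)
  have hSpsd : ((c:ℂ) • CFC.sqrt (Aᴴ * A)).PosSemidef := aux_smul_psd (CFC.sqrt_nonneg (Aᴴ * A)).posSemidef hc
  have hS2 : ((c:ℂ) • CFC.sqrt (Aᴴ * A)) ^ 2 = ((c * c : ℝ) : ℂ) • (Aᴴ * A) := by
    rw [smul_pow, CFC.sq_sqrt _ hM.nonneg]
    push_cast
    rw [pow_two]
  rw [aux_traceNorm_eq_re_trace_sqrt hXpsd h1, ← aux_eq_sqrt hSpsd hXpsd hS2,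
    Matrix.trace_smul, smul_eq_mul]
  simp only [Complex.mul_re, Complex.ofReal_re, Complex.ofReal_im, zero_mul, sub_zero]
  rw [aux_traceNorm_eq_re_trace_sqrt hM rfl]

lemma aux_sum_abs_diag_le {A : Matrix n n ℂ} (hA : A.IsHermitian) {W : Matrix n n ℂ}
    (hW : W ∈ Matrix.unitaryGroup n ℂ) :
    ∑ i, |((star W * A * W) i i).re| ≤ traceNorm A := by
  rw [aux_traceNorm_herm hA]
  have hQmem : star W * (hA.eigenvectorUnitary : Matrix n n ℂ) ∈ Matrix.unitaryGroup n ℂ :=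
    mul_mem (Unitary.star_mem hW) hA.eigenvectorUnitary.2
  have hrepr : star W * A * W = (star W * (hA.eigenvectorUnitary : Matrix n n ℂ)) *
      Matrix.diagonal (fun j => ((hA.eigenvalues j : ℝ) : ℂ)) *
      star (star W * (hA.eigenvectorUnitary : Matrix n n ℂ)) := by
    conv_lhs => rw [aux_spectral hA]
    rw [Matrix.star_mul, star_star]
    simp only [Matrix.mul_assoc]
  rw [hrepr]
  calc ∑ i, |(((star W * (hA.eigenvectorUnitary : Matrix n n ℂ)) *
        Matrix.diagonal (fun j => ((hA.eigenvalues j : ℝ) : ℂ)) *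
        star (star W * (hA.eigenvectorUnitary : Matrix n n ℂ))) i i).re|
      = ∑ i, |∑ j, hA.eigenvalues j *
          Complex.normSq ((star W * (hA.eigenvectorUnitary : Matrix n n ℂ)) i j)| := by
        refine Finset.sum_congr rfl fun i _ => ?_
        rw [aux_conj_diag_entry_re]
    _ ≤ ∑ i, ∑ j, |hA.eigenvalues j| *
          Complex.normSq ((star W * (hA.eigenvectorUnitary : Matrix n n ℂ)) i j) := by
        refine Finset.sum_le_sum fun i _ => ?_
        refine (Finset.abs_sum_le_sum_abs _ _).trans ?_
        refine Finset.sum_le_sum fun j _ => ?_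
        rw [abs_mul, abs_of_nonneg (Complex.normSq_nonneg _)]
    _ = ∑ j, |hA.eigenvalues j| *
          (∑ i, Complex.normSq ((star W * (hA.eigenvectorUnitary : Matrix n n ℂ)) i j)) := by
        rw [Finset.sum_comm]
        simp [Finset.mul_sum]
    _ = ∑ j, |hA.eigenvalues j| := by
        refine Finset.sum_congr rfl fun j _ => ?_
        rw [aux_col_sum hQmem, mul_one]

lemma aux_trace_herm_mul {M : Matrix n n ℂ} (hM : M.IsHermitian) (X : Matrix n n ℂ) :
    (M * X).trace = ∑ i, (hM.eigenvalues i : ℂ) *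
      ((star (hM.eigenvectorUnitary : Matrix n n ℂ) * X *
        (hM.eigenvectorUnitary : Matrix n n ℂ)) i i) := by
  have h : M * X = (hM.eigenvectorUnitary : Matrix n n ℂ) *
      (Matrix.diagonal (fun i => ((hM.eigenvalues i : ℝ) : ℂ)) *
        (star (hM.eigenvectorUnitary : Matrix n n ℂ) * X)) := by
    conv_lhs => rw [aux_spectral hM]
    simp only [Matrix.mul_assoc]
  rw [h, Matrix.trace_mul_comm, Matrix.mul_assoc, Matrix.trace]
  refine Finset.sum_congr rfl fun i _ => ?_
  simp [Matrix.diagonal_mul, Matrix.mul_assoc]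

lemma aux_re_trace_mul_le {M : Matrix n n ℂ} (hM : M.IsHermitian) {V : Matrix n n ℂ}
    (hV : V ∈ Matrix.unitaryGroup n ℂ) (s : n → ℝ) (hs : ∀ j, |s j| ≤ 1) :
    (M * (V * Matrix.diagonal (fun j => (s j : ℂ)) * star V)).trace.re ≤ traceNorm M := by
  have hQmem : star (hM.eigenvectorUnitary : Matrix n n ℂ) * V ∈ Matrix.unitaryGroup n ℂ :=
    mul_mem (Unitary.star_mem hM.eigenvectorUnitary.2) hV
  rw [aux_traceNorm_herm hM, aux_trace_herm_mul hM, aux_re_sum]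
  refine Finset.sum_le_sum fun i _ => ?_
  have hY : (star (hM.eigenvectorUnitary : Matrix n n ℂ) *
      (V * Matrix.diagonal (fun j => (s j : ℂ)) * star V) *
      (hM.eigenvectorUnitary : Matrix n n ℂ)) i i
      = ((star (hM.eigenvectorUnitary : Matrix n n ℂ) * V) *
        Matrix.diagonal (fun j => (s j : ℂ)) *
        star (star (hM.eigenvectorUnitary : Matrix n n ℂ) * V)) i i := by
    congr 1
    rw [Matrix.star_mul, star_star]
    simp only [Matrix.mul_assoc]
  rw [hY, Complex.mul_re, Complex.ofReal_re, Complex.ofReal_im, zero_mul, sub_zero]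
  have habs : |(((star (hM.eigenvectorUnitary : Matrix n n ℂ) * V) *
      Matrix.diagonal (fun j => (s j : ℂ)) *
      star (star (hM.eigenvectorUnitary : Matrix n n ℂ) * V)) i i).re| ≤ 1 := by
    rw [aux_conj_diag_entry_re]
    refine (Finset.abs_sum_le_sum_abs _ _).trans ?_
    calc ∑ j, |s j * Complex.normSq ((star (hM.eigenvectorUnitary : Matrix n n ℂ) * V) i j)|
        ≤ ∑ j, Complex.normSq ((star (hM.eigenvectorUnitary : Matrix n n ℂ) * V) i j) := by
          refine Finset.sum_le_sum fun j _ => ?_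
          rw [abs_mul, abs_of_nonneg (Complex.normSq_nonneg _)]
          exact mul_le_of_le_one_left (Complex.normSq_nonneg _) (hs j)
      _ = 1 := aux_row_sum hQmem i
  calc hM.eigenvalues i * (((star (hM.eigenvectorUnitary : Matrix n n ℂ) * V) *
        Matrix.diagonal (fun j => (s j : ℂ)) *
        star (star (hM.eigenvectorUnitary : Matrix n n ℂ) * V)) i i).re
      ≤ |hM.eigenvalues i * (((star (hM.eigenvectorUnitary : Matrix n n ℂ) * V) *
        Matrix.diagonal (fun j => (s j : ℂ)) *
        star (star (hM.eigenvectorUnitary : Matrix n n ℂ) * V)) i i).re| := le_abs_self _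
    _ = |hM.eigenvalues i| * |(((star (hM.eigenvectorUnitary : Matrix n n ℂ) * V) *
        Matrix.diagonal (fun j => (s j : ℂ)) *
        star (star (hM.eigenvectorUnitary : Matrix n n ℂ) * V)) i i).re| := abs_mul _ _
    _ ≤ |hM.eigenvalues i| * 1 := mul_le_mul_of_nonneg_left habs (abs_nonneg _)
    _ = |hM.eigenvalues i| := mul_one _

lemma aux_traceNorm_sum_le {ι : Type*} (t : Finset ι) (f : ι → Matrix n n ℂ)
    (hf : ∀ i ∈ t, (f i).IsHermitian) :
    traceNorm (∑ i ∈ t, f i) ≤ ∑ i ∈ t, traceNorm (f i) := by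
  have hC : (∑ i ∈ t, f i).IsHermitian := by
    show (∑ i ∈ t, f i)ᴴ = ∑ i ∈ t, f i
    rw [Matrix.conjTranspose_sum]
    exact Finset.sum_congr rfl fun i hi => (hf i hi).eq
  set sg : n → ℝ := fun j => if hC.eigenvalues j < 0 then -1 else 1 with hsg
  have hsgabs : ∀ j, |sg j| ≤ 1 := fun j => by
    rw [hsg]; dsimp only; split <;> simp
  have hUV : star (hC.eigenvectorUnitary : Matrix n n ℂ) * hC.eigenvectorUnitary = 1 :=
    (Unitary.mem_iff.mp hC.eigenvectorUnitary.2).1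
  have hCX : (∑ i ∈ t, f i) * ((hC.eigenvectorUnitary : Matrix n n ℂ) *
      Matrix.diagonal (fun j => (sg j : ℂ)) * star (hC.eigenvectorUnitary : Matrix n n ℂ))
      = (hC.eigenvectorUnitary : Matrix n n ℂ) *
        Matrix.diagonal (fun j => ((hC.eigenvalues j : ℝ) : ℂ) * (sg j : ℂ)) *
        star (hC.eigenvectorUnitary : Matrix n n ℂ) := by
    calc (∑ i ∈ t, f i) * ((hC.eigenvectorUnitary : Matrix n n ℂ) *
        Matrix.diagonal (fun j => (sg j : ℂ)) * star (hC.eigenvectorUnitary : Matrix n n ℂ))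
        = ((hC.eigenvectorUnitary : Matrix n n ℂ) *
          Matrix.diagonal (fun i => ((hC.eigenvalues i : ℝ) : ℂ)) *
          star (hC.eigenvectorUnitary : Matrix n n ℂ)) *
          ((hC.eigenvectorUnitary : Matrix n n ℂ) *
          Matrix.diagonal (fun j => (sg j : ℂ)) * star (hC.eigenvectorUnitary : Matrix n n ℂ)) := by
          rw [← aux_spectral hC]
      _ = _ := aux_conj_mul hUV _ _
  have htrace : ((∑ i ∈ t, f i) * ((hC.eigenvectorUnitary : Matrix n n ℂ) *
      Matrix.diagonal (fun j => (sg j : ℂ)) *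
      star (hC.eigenvectorUnitary : Matrix n n ℂ))).trace.re = traceNorm (∑ i ∈ t, f i) := by
    rw [hCX, aux_trace_conj_diag hC.eigenvectorUnitary.2, aux_re_sum,
      aux_traceNorm_herm hC]
    refine Finset.sum_congr rfl fun j _ => ?_
    have : ((hC.eigenvalues j : ℝ) : ℂ) * (sg j : ℂ) = ((hC.eigenvalues j * sg j : ℝ) : ℂ) := by
      push_cast; ring
    rw [this, Complex.ofReal_re, hsg]
    dsimp only
    split
    · rw [abs_of_neg (by assumption)]; ring
    · rw [abs_of_nonneg (by linarith [not_lt.mp (by assumption)])]; ring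
  rw [← htrace, Finset.sum_mul, Matrix.trace_sum, aux_re_sum]
  exact Finset.sum_le_sum fun i hi => aux_re_trace_mul_le (hf i hi) hC.eigenvectorUnitary.2 sg hsgabs

end Aux

section Aux2
open Real

lemma aux_twirl_sub {G : Type*} [Group G] [Fintype G] (U : G →* Matrix.unitaryGroup n ℂ)
    (ρ₁ ρ₂ : Matrix n n ℂ) : twirl U ρ₁ - twirl U ρ₂ = twirl U (ρ₁ - ρ₂) := by
  rw [twirl, twirl, twirl, ← smul_sub, ← Finset.sum_sub_distrib]
  congr 1
  refine Finset.sum_congr rfl fun g _ => ?_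
  rw [Matrix.mul_sub, Matrix.sub_mul]

lemma aux_twirl_herm {G : Type*} [Group G] [Fintype G] (U : G →* Matrix.unitaryGroup n ℂ)
    {Δ : Matrix n n ℂ} (hΔ : Δ.IsHermitian) : (twirl U Δ).IsHermitian := by
  rw [twirl]
  show _ᴴ = _
  rw [Matrix.conjTranspose_smul, Matrix.conjTranspose_sum]
  have h1 : ∀ g : G, ((U g : Matrix n n ℂ) * Δ * star (U g : Matrix n n ℂ))ᴴ
      = (U g : Matrix n n ℂ) * Δ * star (U g : Matrix n n ℂ) := fun g => (aux_herm_conj hΔ).eq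
  simp only [h1]
  congr 1
  simp [Complex.star_def, Complex.conj_inv, Complex.conj_natCast]

lemma aux_cardG_ne {G : Type*} [Group G] [Fintype G] : (Fintype.card G : ℂ) ≠ 0 := by
  haveI : Nonempty G := ⟨1⟩
  exact_mod_cast Fintype.card_ne_zero

lemma aux_twirl_density {G : Type*} [Group G] [Fintype G] (U : G →* Matrix.unitaryGroup n ℂ)
    {ρ : Matrix n n ℂ} (hρ : IsDensityMatrix ρ) : IsDensityMatrix (twirl U ρ) := by
  constructor
  · rw [twirl]
    have hc : ((Fintype.card G : ℂ))⁻¹ = (((Fintype.card G : ℝ)⁻¹ : ℝ) : ℂ) := by push_cast; ring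
    rw [hc]
    refine aux_smul_psd ?_ (by positivity)
    refine Finset.sum_induction _ _ (fun a b ha hb => ha.add hb) Matrix.PosSemidef.zero ?_
    intro g _
    rw [Matrix.star_eq_conjTranspose]
    exact hρ.1.mul_mul_conjTranspose_same _
  · rw [twirl, Matrix.trace_smul, Matrix.trace_sum]
    have h1 : ∀ g : G, ((U g : Matrix n n ℂ) * ρ * star (U g : Matrix n n ℂ)).trace = 1 := by
      intro g
      rw [Matrix.trace_mul_cycle, (Unitary.mem_iff.mp (U g).2).1,
        Matrix.one_mul, hρ.2]
    simp only [h1, Finset.sum_const, Finset.card_univ, nsmul_eq_mul, mul_one, smul_eq_mul]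
    exact inv_mul_cancel₀ aux_cardG_ne

lemma aux_traceNorm_twirl_le {G : Type*} [Group G] [Fintype G] (U : G →* Matrix.unitaryGroup n ℂ)
    {Δ : Matrix n n ℂ} (hΔ : Δ.IsHermitian) : traceNorm (twirl U Δ) ≤ traceNorm Δ := by
  rw [twirl]
  have hc : ((Fintype.card G : ℂ))⁻¹ = (((Fintype.card G : ℝ)⁻¹ : ℝ) : ℂ) := by push_cast; ring
  rw [hc, aux_traceNorm_smul (by positivity)]
  have h2 : traceNorm (∑ g : G, (U g : Matrix n n ℂ) * Δ * star (U g : Matrix n n ℂ))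
      ≤ ∑ g : G, traceNorm ((U g : Matrix n n ℂ) * Δ * star (U g : Matrix n n ℂ)) :=
    aux_traceNorm_sum_le _ _ (fun g _ => aux_herm_conj hΔ)
  have h3 : ∀ g : G, traceNorm ((U g : Matrix n n ℂ) * Δ * star (U g : Matrix n n ℂ))
      = traceNorm Δ := fun g => aux_traceNorm_conj (U g).2 Δ
  simp only [h3, Finset.sum_const, Finset.card_univ, nsmul_eq_mul] at h2
  calc (Fintype.card G : ℝ)⁻¹ * traceNorm (∑ g : G, (U g : Matrix n n ℂ) * Δ *
        star (U g : Matrix n n ℂ))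
      ≤ (Fintype.card G : ℝ)⁻¹ * ((Fintype.card G : ℝ) * traceNorm Δ) := by
        refine mul_le_mul_of_nonneg_left h2 (by positivity)
    _ = traceNorm Δ := by
        haveI : Nonempty G := ⟨1⟩
        have : (Fintype.card G : ℝ) ≠ 0 := by exact_mod_cast Fintype.card_ne_zero
        field_simp
end Aux2

section Aux3
open Real

lemma aux_negMulLog_add_le {x y : ℝ} (hx : 0 ≤ x) (hy : 0 ≤ y) :
    negMulLog (x + y) ≤ negMulLog x + negMulLog y := by
  rcases eq_or_lt_of_le hx with h | h
  · simp [← h]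
  rcases eq_or_lt_of_le hy with h' | h'
  · simp [← h']
  have l1 : Real.log x ≤ Real.log (x + y) := Real.log_le_log h (by linarith)
  have l2 : Real.log y ≤ Real.log (x + y) := Real.log_le_log h' (by linarith)
  have m1 := mul_le_mul_of_nonneg_left l1 hx
  have m2 := mul_le_mul_of_nonneg_left l2 hy
  simp only [negMulLog]
  nlinarith

lemma aux_sum_negMulLog_le (b : n → ℝ) (hb : ∀ i, 0 ≤ b i) :
    ∑ i, negMulLog (b i)
      ≤ (∑ i, b i) * Real.log (Fintype.card n) + negMulLog (∑ i, b i) := by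
  rcases eq_or_lt_of_le (Finset.sum_nonneg fun i _ => hb i) with hT | hT
  · have hz : ∀ i ∈ Finset.univ, b i = 0 :=
      (Finset.sum_eq_zero_iff_of_nonneg (fun i _ => hb i)).mp hT.symm
    have : ∀ i ∈ (Finset.univ : Finset n), negMulLog (b i) = 0 := fun i hi => by
      rw [hz i hi, negMulLog_zero]
    rw [Finset.sum_congr rfl this, ← hT]
    simp
  · set T := ∑ i, b i with hTdef
    have hne : Nonempty n := by
      by_contra hc
      rw [not_nonempty_iff] at hc
      rw [hTdef] at hT
      simp [Finset.univ_eq_empty] at hT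
    have hD : (0:ℝ) < Fintype.card n := by exact_mod_cast Fintype.card_pos
    have key : ∀ i, negMulLog (b i)
        ≤ b i * Real.log (Fintype.card n) + T / Fintype.card n - b i - b i * Real.log T := by
      intro i
      rcases eq_or_lt_of_le (hb i) with h | h
      · rw [← h]
        simp only [negMulLog_zero, zero_mul, sub_zero, zero_add, zero_mul]
        positivity
      · have hpos : 0 < T / ((Fintype.card n : ℝ) * b i) := by positivity
        have hlog := Real.log_le_sub_one_of_pos hpos
        rw [Real.log_div (ne_of_gt hT) (by positivity), Real.log_mul (ne_of_gt hD) (ne_of_gt h)]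
          at hlog
        have hmul := mul_le_mul_of_nonneg_left hlog (le_of_lt h)
        have hid : b i * (T / ((Fintype.card n : ℝ) * b i) - 1)
            = T / Fintype.card n - b i := by
          field_simp
        rw [hid] at hmul
        simp only [negMulLog]
        nlinarith
    calc ∑ i, negMulLog (b i)
        ≤ ∑ i, (b i * Real.log (Fintype.card n) + T / Fintype.card n - b i - b i * Real.log T) :=
          Finset.sum_le_sum fun i _ => key i
      _ = T * Real.log (Fintype.card n) + negMulLog T := by
          simp only [Finset.sum_sub_distrib, Finset.sum_add_distrib, ← Finset.sum_mul,
            Finset.sum_const, Finset.card_univ, nsmul_eq_mul, ← hTdef, negMulLog]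
          field_simp
          ring

lemma aux_sum_negMulLog_min_le (m p : n → ℝ) (hm0 : ∀ i, 0 ≤ m i) (hmp : ∀ i, m i ≤ p i)
    (hp1 : ∑ i, p i = 1) :
    ∑ i, negMulLog (m i) ≤ ∑ i, negMulLog (p i) + negMulLog (∑ i, m i) := by
  have hp0 : ∀ i, 0 ≤ p i := fun i => le_trans (hm0 i) (hmp i)
  have hsle : ∑ i, m i ≤ 1 := by
    rw [← hp1]; exact Finset.sum_le_sum fun i _ => hmp i
  have hs0 : 0 ≤ ∑ i, m i := Finset.sum_nonneg fun i _ => hm0 i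
  rcases eq_or_lt_of_le hs0 with hz | hspos
  · -- all m i = 0
    have hz' : ∀ i ∈ Finset.univ, m i = 0 :=
      (Finset.sum_eq_zero_iff_of_nonneg (fun i _ => hm0 i)).mp hz.symm
    have h1 : ∑ i, negMulLog (m i) = 0 :=
      Finset.sum_eq_zero fun i hi => by rw [hz' i hi, negMulLog_zero]
    rw [h1, ← hz]
    simp only [negMulLog_zero, add_zero]
    refine Finset.sum_nonneg fun i _ => negMulLog_nonneg (hp0 i) ?_
    calc p i ≤ ∑ j, p j := Finset.single_le_sum (fun j _ => hp0 j) (Finset.mem_univ i)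
      _ = 1 := hp1
  rcases eq_or_lt_of_le hsle with hone | hlt
  · -- m = p
    have : ∀ i ∈ Finset.univ, p i - m i = 0 := by
      refine (Finset.sum_eq_zero_iff_of_nonneg (fun i _ => sub_nonneg.mpr (hmp i))).mp ?_
      rw [Finset.sum_sub_distrib, hp1, hone]
      ring
    have hpm : ∀ i, m i = p i := fun i => by
      have := this i (Finset.mem_univ i); linarith
    simp only [hpm]
    rw [hp1]
    simp
  -- 0 < s < 1
  set s := ∑ i, m i with hsdef
  have key : ∀ i, negMulLog (m i) + m i * Real.log s ≤ negMulLog (p i) := by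
    intro i
    have hs' : s ≠ 0 := ne_of_gt hspos
    have h1s : (1:ℝ) - s ≠ 0 := by linarith
    have hcomb : p i = s * (m i / s) + (1 - s) * ((p i - m i) / (1 - s)) := by
      field_simp
      ring
    have hconc : s * negMulLog (m i / s) + (1 - s) * negMulLog ((p i - m i) / (1 - s))
        ≤ negMulLog (s * (m i / s) + (1 - s) * ((p i - m i) / (1 - s))) := by
      have hh : s • negMulLog (m i / s) + (1 - s) • negMulLog ((p i - m i) / (1 - s))
          ≤ negMulLog (s • (m i / s) + (1 - s) • ((p i - m i) / (1 - s))) :=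
        Real.concaveOn_negMulLog.2
          (Set.mem_Ici.mpr (div_nonneg (hm0 i) (le_of_lt hspos)))
          (Set.mem_Ici.mpr (div_nonneg (sub_nonneg.mpr (hmp i)) (by linarith)))
          (le_of_lt hspos) (by linarith) (by ring)
      simpa [smul_eq_mul] using hh
    rw [← hcomb] at hconc
    have h2 : s * negMulLog (m i / s) = negMulLog (m i) + m i * Real.log s := by
      rcases eq_or_lt_of_le (hm0 i) with h | h
      · rw [← h]; simp
      · rw [div_eq_mul_inv, negMulLog_mul]
        simp only [Real.negMulLog, Real.log_inv]
        field_simp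
    have h3 : 0 ≤ (1 - s) * negMulLog ((p i - m i) / (1 - s)) := by
      refine mul_nonneg (by linarith)
        (negMulLog_nonneg (div_nonneg (sub_nonneg.mpr (hmp i)) (by linarith)) ?_)
      rw [div_le_one (by linarith)]
      have : p i - m i ≤ ∑ j, (p j - m j) :=
        Finset.single_le_sum (fun j _ => sub_nonneg.mpr (hmp j)) (Finset.mem_univ i)
      rw [Finset.sum_sub_distrib, hp1, ← hsdef] at this
      linarith
    calc negMulLog (m i) + m i * Real.log s = s * negMulLog (m i / s) := h2.symm
      _ ≤ s * negMulLog (m i / s) + (1 - s) * negMulLog ((p i - m i) / (1 - s)) := by linarith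
      _ ≤ negMulLog (p i) := hconc
  have := Finset.sum_le_sum fun i (_ : i ∈ Finset.univ) => key i
  rw [Finset.sum_add_distrib, ← Finset.sum_mul, ← hsdef] at this
  have hnml : negMulLog s = -(s * Real.log s) := by rw [negMulLog]; ring
  linarith

lemma aux_classicalFA (p q : n → ℝ) (hp0 : ∀ i, 0 ≤ p i) (hp1 : ∑ i, p i = 1)
    (hq0 : ∀ i, 0 ≤ q i) (hq1 : ∑ i, q i = 1) :
    ∑ i, negMulLog (q i) - ∑ i, negMulLog (p i)
      ≤ ((∑ i, |p i - q i|) / 2) * Real.log (Fintype.card n)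
        + Real.binEntropy ((∑ i, |p i - q i|) / 2) := by
  set T := (∑ i, |p i - q i|) / 2 with hTdef
  set m := fun i => min (p i) (q i) with hmdef
  have hm0 : ∀ i, 0 ≤ m i := fun i => le_min (hp0 i) (hq0 i)
  have hmq : ∀ i, m i ≤ q i := fun i => min_le_right _ _
  have hmp : ∀ i, m i ≤ p i := fun i => min_le_left _ _
  have hTb : ∑ i, (q i - m i) = T := by
    have hpt : ∀ i, q i - m i = (|p i - q i| - (p i - q i)) / 2 := by
      intro i
      rcases le_total (p i) (q i) with h | h
      · rw [hmdef]; dsimp only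
        rw [min_eq_left h, abs_of_nonpos (by linarith)]; ring
      · rw [hmdef]; dsimp only
        rw [min_eq_right h, abs_of_nonneg (by linarith)]; ring
    rw [Finset.sum_congr rfl fun i _ => hpt i, hTdef, ← Finset.sum_div]
    have : ∑ i, (|p i - q i| - (p i - q i)) = ∑ i, |p i - q i| := by
      rw [Finset.sum_sub_distrib, Finset.sum_sub_distrib, hp1, hq1]
      ring
    rw [this]
  have hsm : ∑ i, m i = 1 - T := by
    have := hTb
    rw [Finset.sum_sub_distrib, hq1] at this
    linarith
  have step1 : ∑ i, negMulLog (q i) ≤ ∑ i, negMulLog (m i) + ∑ i, negMulLog (q i - m i) := by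
    rw [← Finset.sum_add_distrib]
    refine Finset.sum_le_sum fun i _ => ?_
    have h := aux_negMulLog_add_le (hm0 i) (sub_nonneg.mpr (hmq i))
    rw [add_sub_cancel] at h
    exact h
  have step2 : ∑ i, negMulLog (q i - m i)
      ≤ T * Real.log (Fintype.card n) + negMulLog T := by
    have h := aux_sum_negMulLog_le (fun i => q i - m i) (fun i => sub_nonneg.mpr (hmq i))
    rw [hTb] at h
    exact h
  have step3 : ∑ i, negMulLog (m i) ≤ ∑ i, negMulLog (p i) + negMulLog (1 - T) := by
    have h := aux_sum_negMulLog_min_le m p hm0 hmp hp1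
    rw [hsm] at h
    exact h
  rw [Real.binEntropy_eq_negMulLog_add_negMulLog_one_sub]
  linarith

end Aux3

section Aux4
open Real

lemma aux_vnEntropy_eq {A : Matrix n n ℂ} (hA : A.IsHermitian) :
    vnEntropy A = (∑ i, negMulLog (hA.eigenvalues i)) / Real.log 2 := by
  rw [vnEntropy, dif_pos hA, Finset.sum_div, ← Finset.sum_neg_distrib]
  refine Finset.sum_congr rfl fun i _ => ?_
  rw [Real.logb, negMulLog]
  ring

lemma aux_sum_eig {A : Matrix n n ℂ} (hA : A.IsHermitian) (h1 : A.trace = 1) :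
    ∑ i, hA.eigenvalues i = 1 := by
  have h2 : (∑ i, ((hA.eigenvalues i : ℝ) : ℂ)) = 1 := by
    rw [← aux_trace_conj_diag hA.eigenvectorUnitary.2 (fun i => ((hA.eigenvalues i : ℝ) : ℂ)),
      ← aux_spectral hA, h1]
  exact_mod_cast h2

lemma aux_nonempty {ρ : Matrix n n ℂ} (hρ : IsDensityMatrix ρ) : Nonempty n := by
  by_contra hc
  rw [not_nonempty_iff] at hc
  have h := hρ.2
  rw [Matrix.trace] at h
  simp [Finset.univ_eq_empty] at h

lemma aux_pinch {σ : Matrix n n ℂ} (hσ : σ.PosSemidef) {W : Matrix n n ℂ}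
    (hW : W ∈ Matrix.unitaryGroup n ℂ) :
    ∑ j, negMulLog (hσ.1.eigenvalues j) ≤ ∑ i, negMulLog (((star W * σ * W) i i).re) := by
  have hQmem : star W * (hσ.1.eigenvectorUnitary : Matrix n n ℂ) ∈ Matrix.unitaryGroup n ℂ :=
    mul_mem (Unitary.star_mem hW) hσ.1.eigenvectorUnitary.2
  have hrepr : star W * σ * W = (star W * (hσ.1.eigenvectorUnitary : Matrix n n ℂ)) *
      Matrix.diagonal (fun j => ((hσ.1.eigenvalues j : ℝ) : ℂ)) *
      star (star W * (hσ.1.eigenvectorUnitary : Matrix n n ℂ)) := by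
    conv_lhs => rw [aux_spectral hσ.1]
    rw [Matrix.star_mul, star_star]
    simp only [Matrix.mul_assoc]
  have hentry : ∀ i, ((star W * σ * W) i i).re = ∑ j, hσ.1.eigenvalues j *
      Complex.normSq ((star W * (hσ.1.eigenvectorUnitary : Matrix n n ℂ)) i j) := by
    intro i
    rw [hrepr, aux_conj_diag_entry_re]
  have hjensen : ∀ i, ∑ j, Complex.normSq ((star W * (hσ.1.eigenvectorUnitary : Matrix n n ℂ)) i j)
      * negMulLog (hσ.1.eigenvalues j) ≤ negMulLog (((star W * σ * W) i i).re) := by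
    intro i
    rw [hentry i]
    have := Real.concaveOn_negMulLog.le_map_sum
      (t := Finset.univ) (w := fun j => Complex.normSq ((star W * (hσ.1.eigenvectorUnitary : Matrix n n ℂ)) i j))
      (p := fun j => hσ.1.eigenvalues j)
      (fun j _ => Complex.normSq_nonneg _) (aux_row_sum hQmem i)
      (fun j _ => Set.mem_Ici.mpr (hσ.eigenvalues_nonneg j))
    simp only [smul_eq_mul] at this
    refine le_trans (le_of_eq ?_) (this.trans (le_of_eq ?_))
    · rfl
    · congr 1
      exact Finset.sum_congr rfl fun j _ => mul_comm _ _
  calc ∑ j, negMulLog (hσ.1.eigenvalues j)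
      = ∑ j, (∑ i, Complex.normSq ((star W * (hσ.1.eigenvectorUnitary : Matrix n n ℂ)) i j))
          * negMulLog (hσ.1.eigenvalues j) := by
        refine Finset.sum_congr rfl fun j _ => ?_
        rw [aux_col_sum hQmem, one_mul]
    _ = ∑ i, ∑ j, Complex.normSq ((star W * (hσ.1.eigenvectorUnitary : Matrix n n ℂ)) i j)
          * negMulLog (hσ.1.eigenvalues j) := by
        rw [Finset.sum_comm]
        simp [Finset.sum_mul]
    _ ≤ ∑ i, negMulLog (((star W * σ * W) i i).re) := Finset.sum_le_sum fun i _ => hjensen i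

lemma aux_binEntropy2_eq (x : ℝ) : binEntropy2 x = Real.binEntropy x / Real.log 2 := by
  rw [binEntropy2, Real.binEntropy, Real.log_inv, Real.log_inv, Real.logb, Real.logb]
  ring

lemma aux_binEntropy_mono {a b : ℝ} (h0 : 0 ≤ a) (hab : a ≤ b) (hb : b ≤ 1/2) :
    Real.binEntropy a ≤ Real.binEntropy b := by
  have h2 : ((2:ℝ)⁻¹) = 1/2 := by norm_num
  have ha : a ∈ Set.Icc (0:ℝ) 2⁻¹ := ⟨h0, by rw [h2]; linarith⟩
  have hbm : b ∈ Set.Icc (0:ℝ) 2⁻¹ := ⟨le_trans h0 hab, by rw [h2]; linarith⟩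
  exact Real.binEntropy_strictMonoOn.monotoneOn ha hbm hab

lemma aux_mono {c a b : ℝ} (hc : 0 ≤ c) (h0 : 0 ≤ a) (hab : a ≤ b) (hb : b ≤ 1/2) :
    c * a + binEntropy2 a ≤ c * b + binEntropy2 b := by
  refine add_le_add (mul_le_mul_of_nonneg_left hab hc) ?_
  rw [aux_binEntropy2_eq, aux_binEntropy2_eq]
  have hlog2 : (0:ℝ) < Real.log 2 := Real.log_pos (by norm_num)
  exact div_le_div_of_nonneg_right (aux_binEntropy_mono h0 hab hb) hlog2.le

lemma aux_fannes (ρ σ : Matrix n n ℂ) (hρ : IsDensityMatrix ρ) (hσ : IsDensityMatrix σ)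
    (h : traceNorm (ρ - σ) ≤ 1) :
    vnEntropy σ - vnEntropy ρ
      ≤ Real.logb 2 (Fintype.card n) * (traceNorm (ρ - σ) / 2)
        + binEntropy2 (traceNorm (ρ - σ) / 2) := by
  haveI hne : Nonempty n := aux_nonempty hρ
  obtain ⟨hρp, hρ1⟩ := hρ
  obtain ⟨hσp, hσ1⟩ := hσ
  have hρh : ρ.IsHermitian := hρp.1
  have hσh : σ.IsHermitian := hσp.1
  have hWmem : (hρh.eigenvectorUnitary : Matrix n n ℂ) ∈ Matrix.unitaryGroup n ℂ :=
    hρh.eigenvectorUnitary.2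
  set W := (hρh.eigenvectorUnitary : Matrix n n ℂ) with hWdef
  set p := fun i => hρh.eigenvalues i with hpdef
  set q := fun i => ((star W * σ * W) i i).re with hqdef
  -- representation of q
  have hQmem : star W * (hσh.eigenvectorUnitary : Matrix n n ℂ) ∈ Matrix.unitaryGroup n ℂ :=
    mul_mem (Unitary.star_mem hWmem) hσh.eigenvectorUnitary.2
  have hrepr : star W * σ * W = (star W * (hσh.eigenvectorUnitary : Matrix n n ℂ)) *
      Matrix.diagonal (fun j => ((hσh.eigenvalues j : ℝ) : ℂ)) *
      star (star W * (hσh.eigenvectorUnitary : Matrix n n ℂ)) := by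
    conv_lhs => rw [aux_spectral hσh]
    rw [Matrix.star_mul, star_star]
    simp only [Matrix.mul_assoc]
  have hq_eq : ∀ i, q i = ∑ j, hσh.eigenvalues j *
      Complex.normSq ((star W * (hσh.eigenvectorUnitary : Matrix n n ℂ)) i j) := by
    intro i
    rw [hqdef]
    dsimp only
    rw [hrepr, aux_conj_diag_entry_re]
  have hq0 : ∀ i, 0 ≤ q i := fun i => by
    rw [hq_eq i]
    exact Finset.sum_nonneg fun j _ =>
      mul_nonneg (hσp.eigenvalues_nonneg j) (Complex.normSq_nonneg _)
  have hq1 : ∑ i, q i = 1 := by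
    have : ∑ i, q i = ∑ j, hσh.eigenvalues j *
        (∑ i, Complex.normSq ((star W * (hσh.eigenvectorUnitary : Matrix n n ℂ)) i j)) := by
      rw [Finset.sum_congr rfl fun i _ => hq_eq i, Finset.sum_comm]
      simp [Finset.mul_sum]
    rw [this]
    have : ∀ j ∈ Finset.univ, hσh.eigenvalues j *
        (∑ i, Complex.normSq ((star W * (hσh.eigenvectorUnitary : Matrix n n ℂ)) i j))
        = hσh.eigenvalues j := fun j _ => by rw [aux_col_sum hQmem, mul_one]
    rw [Finset.sum_congr rfl this]
    exact aux_sum_eig hσh hσ1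
  have hp0 : ∀ i, 0 ≤ p i := fun i => hρp.eigenvalues_nonneg i
  have hp1 : ∑ i, p i = 1 := aux_sum_eig hρh hρ1
  -- p i - q i as diagonal entries of conjugated difference
  have hΔh : (ρ - σ).IsHermitian := hρh.sub hσh
  have hdiff : ∀ i, p i - q i = ((star W * (ρ - σ) * W) i i).re := by
    intro i
    have hsub : star W * (ρ - σ) * W = star W * ρ * W - star W * σ * W := by
      rw [Matrix.mul_sub, Matrix.sub_mul]
    have hdiag : star W * ρ * W = Matrix.diagonal (RCLike.ofReal ∘ hρh.eigenvalues) := by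
      have hU : star W * W = 1 := (Unitary.mem_iff.mp hWmem).1
      conv_lhs => rw [aux_spectral hρh]
      rw [← hWdef]
      simp only [Matrix.mul_assoc]
      rw [hU, Matrix.mul_one, ← Matrix.mul_assoc, hU, Matrix.one_mul]
      rfl
    rw [hsub, Matrix.sub_apply, hdiag, Complex.sub_re, Matrix.diagonal_apply_eq]
    rw [hpdef, hqdef]
    simp [Function.comp]
  have hT'le : ∑ i, |p i - q i| ≤ traceNorm (ρ - σ) := by
    rw [Finset.sum_congr rfl fun i _ => congrArg abs (hdiff i)]
    exact aux_sum_abs_diag_le hΔh hWmem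
  have hT'0 : 0 ≤ ∑ i, |p i - q i| := Finset.sum_nonneg fun i _ => abs_nonneg _
  -- classical FA
  have hclass := aux_classicalFA p q hp0 hp1 hq0 hq1
  -- pinching
  have hpinch := aux_pinch hσp hWmem
  -- entropies
  have hSρ : vnEntropy ρ = (∑ i, negMulLog (p i)) / Real.log 2 := aux_vnEntropy_eq hρh
  have hSσ : vnEntropy σ = (∑ j, negMulLog (hσh.eigenvalues j)) / Real.log 2 :=
    aux_vnEntropy_eq hσh
  have hlog2 : (0:ℝ) < Real.log 2 := Real.log_pos (by norm_num)
  have hD1 : (1:ℝ) ≤ Fintype.card n := by exact_mod_cast Fintype.card_pos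
  have hlogD : 0 ≤ Real.log (Fintype.card n) := Real.log_nonneg hD1
  -- natural-log bound at T' := (∑ |p i - q i|)/2
  have hnat : ∑ j, negMulLog (hσh.eigenvalues j) - ∑ i, negMulLog (p i)
      ≤ ((∑ i, |p i - q i|) / 2) * Real.log (Fintype.card n)
        + Real.binEntropy ((∑ i, |p i - q i|) / 2) := by
    have : ∑ j, negMulLog (hσh.eigenvalues j) ≤ ∑ i, negMulLog (q i) := hpinch
    linarith
  -- monotonicity in T'
  have hmono : ((∑ i, |p i - q i|) / 2) * Real.log (Fintype.card n)
        + Real.binEntropy ((∑ i, |p i - q i|) / 2)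
      ≤ (traceNorm (ρ - σ) / 2) * Real.log (Fintype.card n)
        + Real.binEntropy (traceNorm (ρ - σ) / 2) := by
    refine add_le_add (mul_le_mul_of_nonneg_right (by linarith) hlogD) ?_
    refine aux_binEntropy_mono (by linarith) (by linarith) (by linarith)
  -- put together, dividing by log 2
  rw [hSρ, hSσ, div_sub_div_same, aux_binEntropy2_eq, Real.logb]
  have hfinal : ∑ j, negMulLog (hσh.eigenvalues j) - ∑ i, negMulLog (p i)
      ≤ (traceNorm (ρ - σ) / 2) * Real.log (Fintype.card n)
        + Real.binEntropy (traceNorm (ρ - σ) / 2) := le_trans hnat hmono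
  calc (∑ j, negMulLog (hσh.eigenvalues j) - ∑ i, negMulLog (p i)) / Real.log 2
      ≤ ((traceNorm (ρ - σ) / 2) * Real.log (Fintype.card n)
          + Real.binEntropy (traceNorm (ρ - σ) / 2)) / Real.log 2 :=
        div_le_div_of_nonneg_right hfinal hlog2.le
    _ = Real.log (Fintype.card n) / Real.log 2 * (traceNorm (ρ - σ) / 2)
          + Real.binEntropy (traceNorm (ρ - σ) / 2) / Real.log 2 := by ring

end Aux4

theorem relEntAsym_continuity {n G : Type*} [Fintype n] [DecidableEq n] [Group G] [Fintype G]
    (U : G →* Matrix.unitaryGroup n ℂ) (ρ₁ ρ₂ : Matrix n n ℂ)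
    (h₁ : IsDensityMatrix ρ₁) (h₂ : IsDensityMatrix ρ₂)
    (hT : traceNorm (ρ₁ - ρ₂) ≤ 1) :
    |relEntAsym U ρ₁ - relEntAsym U ρ₂|
      ≤ Real.logb 2 (Fintype.card n) * traceNorm (ρ₁ - ρ₂)
        + 2 * binEntropy2 (traceNorm (ρ₁ - ρ₂) / 2) := by
  haveI hne : Nonempty n := aux_nonempty h₁
  have hΔh : (ρ₁ - ρ₂).IsHermitian := h₁.1.1.sub h₂.1.1
  have ht0 : 0 ≤ traceNorm (ρ₁ - ρ₂) := aux_traceNorm_nonneg hΔh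
  have h𝒢₁ := aux_twirl_density U h₁
  have h𝒢₂ := aux_twirl_density U h₂
  have h𝒢Δh : (twirl U ρ₁ - twirl U ρ₂).IsHermitian := by
    rw [aux_twirl_sub]; exact aux_twirl_herm U hΔh
  have hs0 : 0 ≤ traceNorm (twirl U ρ₁ - twirl U ρ₂) := aux_traceNorm_nonneg h𝒢Δh
  have hsle : traceNorm (twirl U ρ₁ - twirl U ρ₂) ≤ traceNorm (ρ₁ - ρ₂) := by
    rw [aux_twirl_sub]; exact aux_traceNorm_twirl_le U hΔh
  have hs1 : traceNorm (twirl U ρ₁ - twirl U ρ₂) ≤ 1 := le_trans hsle hT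
  have hsymm : traceNorm (ρ₂ - ρ₁) = traceNorm (ρ₁ - ρ₂) := by
    rw [← aux_traceNorm_neg (ρ₁ - ρ₂), neg_sub]
  have hsymm' : traceNorm (twirl U ρ₂ - twirl U ρ₁)
      = traceNorm (twirl U ρ₁ - twirl U ρ₂) := by
    rw [← aux_traceNorm_neg (twirl U ρ₁ - twirl U ρ₂), neg_sub]
  have hD0 : 0 ≤ Real.logb 2 (Fintype.card n) :=
    Real.logb_nonneg (by norm_num) (by exact_mod_cast Fintype.card_pos)
  have f1 := aux_fannes ρ₁ ρ₂ h₁ h₂ hT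
  have f2 := aux_fannes ρ₂ ρ₁ h₂ h₁ (by rw [hsymm]; exact hT)
  rw [hsymm] at f2
  have g1 := aux_fannes (twirl U ρ₁) (twirl U ρ₂) h𝒢₁ h𝒢₂ hs1
  have g2 := aux_fannes (twirl U ρ₂) (twirl U ρ₁) h𝒢₂ h𝒢₁ (by rw [hsymm']; exact hs1)
  rw [hsymm'] at g2
  have hmono : Real.logb 2 (Fintype.card n) * (traceNorm (twirl U ρ₁ - twirl U ρ₂) / 2)
        + binEntropy2 (traceNorm (twirl U ρ₁ - twirl U ρ₂) / 2)
      ≤ Real.logb 2 (Fintype.card n) * (traceNorm (ρ₁ - ρ₂) / 2)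
        + binEntropy2 (traceNorm (ρ₁ - ρ₂) / 2) :=
    aux_mono hD0 (by linarith) (by linarith) (by linarith)
  have habs1 : |vnEntropy (twirl U ρ₁) - vnEntropy (twirl U ρ₂)|
      ≤ Real.logb 2 (Fintype.card n) * (traceNorm (ρ₁ - ρ₂) / 2)
        + binEntropy2 (traceNorm (ρ₁ - ρ₂) / 2) := by
    rw [abs_sub_le_iff]
    constructor <;> linarith
  have habs2 : |vnEntropy ρ₂ - vnEntropy ρ₁|
      ≤ Real.logb 2 (Fintype.card n) * (traceNorm (ρ₁ - ρ₂) / 2)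
        + binEntropy2 (traceNorm (ρ₁ - ρ₂) / 2) := by
    rw [abs_sub_le_iff]
    constructor <;> linarith
  rw [relEntAsym, relEntAsym]
  have hrw : vnEntropy (twirl U ρ₁) - vnEntropy ρ₁ - (vnEntropy (twirl U ρ₂) - vnEntropy ρ₂)
      = (vnEntropy (twirl U ρ₁) - vnEntropy (twirl U ρ₂)) + (vnEntropy ρ₂ - vnEntropy ρ₁) := by
    ring
  rw [hrw]
  calc |(vnEntropy (twirl U ρ₁) - vnEntropy (twirl U ρ₂)) + (vnEntropy ρ₂ - vnEntropy ρ₁)|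
      ≤ |vnEntropy (twirl U ρ₁) - vnEntropy (twirl U ρ₂)| + |vnEntropy ρ₂ - vnEntropy ρ₁| :=
        abs_add_le _ _
    _ ≤ (Real.logb 2 (Fintype.card n) * (traceNorm (ρ₁ - ρ₂) / 2)
          + binEntropy2 (traceNorm (ρ₁ - ρ₂) / 2))
        + (Real.logb 2 (Fintype.card n) * (traceNorm (ρ₁ - ρ₂) / 2)
          + binEntropy2 (traceNorm (ρ₁ - ρ₂) / 2)) := add_le_add habs1 habs2
    _ = Real.logb 2 (Fintype.card n) * traceNorm (ρ₁ - ρ₂)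
          + 2 * binEntropy2 (traceNorm (ρ₁ - ρ₂) / 2) := by ring
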